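/- If S is a two-distance set of n points on the unit sphere S^{d-1} in R^d, then n ≤ (d+1)(d+2)/2 (in fact stronger bounds hold, but prove this harmonic-polynomial bound). -/

import Mathlib

open Polynomial Matrix

noncomputable section

/-- The Borsuk number of a bounded set `S`: the least `k` such that `S` can be covered
by `k` subsets each of diameter strictly smaller than the diameter of `S`. -/
def borsukNumber {d : ℕ} (S : Set (EuclideanSpace ℝ (Fin d))) : ℕ :=
  sInf {k | ∃ c : Fin k → Set (EuclideanSpace ℝ (Fin d)),
    (∀ i, c i ⊆ S ∧ Metric.diam (c i) < Metric.diam S) ∧ S ⊆ ⋃ i, c i}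

/-- The clique covering number `θ(G)`: the least number of cliques covering all vertices. -/
def cliqueCoverNumber {V : Type*} (G : SimpleGraph V) : ℕ :=
  sInf {k | ∃ c : Fin k → Set V, (∀ i, G.IsClique (c i)) ∧ (⋃ i, c i) = Set.univ}

/-- The bordered matrix `A_G(t)`: first row and column `(0,1,…,1)`, zero diagonal,
entry `1` at edges of `G` and `t` at non-edges. The `none` index is the border. -/
def graphMat {n : ℕ} (G : SimpleGraph (Fin n)) [DecidableRel G.Adj]
    {R : Type*} [CommRing R] (t : R) : Matrix (Option (Fin n)) (Option (Fin n)) R :=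
  fun i j => match i, j with
  | none, none => 0
  | none, some _ => 1
  | some _, none => 1
  | some i, some j => if i = j then 0 else if G.Adj i j then 1 else t

/-- `C_G(t) = det A_G(t)` as a polynomial in `t`. -/
def graphPoly {n : ℕ} (G : SimpleGraph (Fin n)) [DecidableRel G.Adj] : Polynomial ℝ :=
  (graphMat G (Polynomial.X : Polynomial ℝ)).det

/-- `τ₁(G)`: the smallest root `t > 1` of `C_G`. -/
def tau1 {n : ℕ} (G : SimpleGraph (Fin n)) [DecidableRel G.Adj] : ℝ :=
  sInf {t : ℝ | 1 < t ∧ (graphPoly G).IsRoot t}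

open scoped Classical in
/-- `μ(G)`: the multiplicity of the smallest root `t > 1` of `C_G`, or `0` if none exists. -/
def mu {n : ℕ} (G : SimpleGraph (Fin n)) [DecidableRel G.Adj] : ℕ :=
  if (∃ t : ℝ, 1 < t ∧ (graphPoly G).IsRoot t) then
    (graphPoly G).rootMultiplicity (tau1 G) else 0

/-- `f` realizes `G` in Euclidean space as a two-distance set: distance `1` on edges
and distance `b` on non-edges. -/
def IsRealization {n d : ℕ} (G : SimpleGraph (Fin n)) (b : ℝ)
    (f : Fin n → EuclideanSpace ℝ (Fin d)) : Prop :=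
  (∀ i j, G.Adj i j → dist (f i) (f j) = 1) ∧
  (∀ i j, i ≠ j → ¬ G.Adj i j → dist (f i) (f j) = b)

/-- The Cayley–Menger matrix of a tuple of points (the `none` index is the border). -/
def cmMat {n d : ℕ} (p : Fin n → EuclideanSpace ℝ (Fin d)) :
    Matrix (Option (Fin n)) (Option (Fin n)) ℝ :=
  fun i j => match i, j with
  | none, none => 0
  | none, some _ => 1
  | some _, none => 1
  | some i, some j => dist (p i) (p j) ^ 2

/-- `G` is a disjoint union of cliques (adjacency is transitive). -/
def IsUnionOfCliques {V : Type*} (G : SimpleGraph V) : Prop :=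
  ∀ u v w, G.Adj u v → G.Adj v w → u ≠ w → G.Adj u w

/-- `G` is complete multipartite (non-adjacency is transitive). -/
def IsCompleteMultipartite {V : Type*} (G : SimpleGraph V) : Prop :=
  ∀ u v w, ¬ G.Adj u v → ¬ G.Adj v w → ¬ G.Adj u w

/-- The clique number `ω(G)`. -/
def cliqueNumber {V : Type*} (G : SimpleGraph V) : ℕ :=
  sSup {k | ∃ s : Finset V, G.IsNClique k s}

private def mono (d : ℕ) : (Option (Fin d) ⊕ Sym2 (Fin d)) → (EuclideanSpace ℝ (Fin d) → ℝ)
  | .inl none => fun _ => 1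
  | .inl (some i) => fun x => x i
  | .inr s => fun x => Sym2.lift ⟨fun i j => x i * x j, fun i j => mul_comm _ _⟩ s

private lemma prod_mem_span {d : ℕ} (i j : Fin d) :
    (fun x : EuclideanSpace ℝ (Fin d) => x i * x j) ∈
      Submodule.span ℝ (Set.range (mono d)) := by
  have h : (fun x : EuclideanSpace ℝ (Fin d) => x i * x j) = mono d (.inr s(i,j)) := by
    funext x; simp [mono]
  rw [h]; exact Submodule.subset_span ⟨_, rfl⟩

private lemma quad_mem_span {d : ℕ} (p : EuclideanSpace ℝ (Fin d)) (a b : ℝ) :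
    (fun x : EuclideanSpace ℝ (Fin d) =>
        (2 - 2 * (inner ℝ p x : ℝ) - a ^ 2) * (2 - 2 * (inner ℝ p x : ℝ) - b ^ 2)) ∈
      Submodule.span ℝ (Set.range (mono d)) := by
  have key : (fun x : EuclideanSpace ℝ (Fin d) =>
        (2 - 2 * (inner ℝ p x : ℝ) - a ^ 2) * (2 - 2 * (inner ℝ p x : ℝ) - b ^ 2))
      = ((2 - a^2) * (2 - b^2)) • mono d (.inl none)
        + (∑ i : Fin d, (-(2 * (4 - a^2 - b^2)) * p i) • mono d (.inl (some i)))
        + (∑ i : Fin d, ∑ j : Fin d, (4 * p i * p j) •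
            (fun x : EuclideanSpace ℝ (Fin d) => x i * x j)) := by
    funext x
    have ht : (inner ℝ p x : ℝ) = ∑ i, p i * x i := by simp [PiLp.inner_apply, mul_comm]
    simp only [Pi.add_apply, Pi.smul_apply, Finset.sum_apply, smul_eq_mul, mono]
    have h2 : ∑ i : Fin d, ∑ j : Fin d, (4 * p i * p j) * (x i * x j)
        = 4 * ((∑ i, p i * x i) * (∑ j, p j * x j)) := by
      rw [Finset.sum_mul_sum, Finset.mul_sum]
      refine Finset.sum_congr rfl fun i _ => ?_
      rw [Finset.mul_sum]
      exact Finset.sum_congr rfl fun j _ => by ring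
    have h1 : ∑ i : Fin d, (-(2*(4-a^2-b^2)) * p i) * x i
        = -(2*(4-a^2-b^2)) * ∑ i, p i * x i := by
      rw [Finset.mul_sum]; exact Finset.sum_congr rfl fun i _ => by ring
    rw [h1, h2, ht]; ring
  rw [key]
  refine Submodule.add_mem _ (Submodule.add_mem _ ?_ ?_) ?_
  · exact Submodule.smul_mem _ _ (Submodule.subset_span ⟨_, rfl⟩)
  · exact Submodule.sum_mem _ fun i _ => Submodule.smul_mem _ _ (Submodule.subset_span ⟨_, rfl⟩)
  · exact Submodule.sum_mem _ fun i _ => Submodule.sum_mem _ fun j _ =>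
      Submodule.smul_mem _ _ (prod_mem_span i j)

theorem stmt2 {d : ℕ} (S : Finset (EuclideanSpace ℝ (Fin d)))
    (hsph : ∀ p ∈ S, ‖p‖ = 1)
    (h : ({r : ℝ | ∃ p ∈ S, ∃ q ∈ S, p ≠ q ∧ dist p q = r}).ncard ≤ 2) :
    S.card ≤ (d + 1) * (d + 2) / 2 := by
  classical
  set T : Set ℝ := {r : ℝ | ∃ p ∈ S, ∃ q ∈ S, p ≠ q ∧ dist p q = r} with hTdef
  have hTpos : ∀ r ∈ T, r ≠ 0 := by
    rintro r ⟨p, hp, q, hq, hpq, rfl⟩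
    exact ne_of_gt (dist_pos.2 hpq)
  have hfin : T.Finite := by
    apply Set.Finite.subset ((S ×ˢ S).finite_toSet.image
      (fun z : EuclideanSpace ℝ (Fin d) × EuclideanSpace ℝ (Fin d) => dist z.1 z.2))
    rintro r ⟨p, hp, q, hq, _, rfl⟩
    exact ⟨(p, q), by simp [hp, hq], rfl⟩
  obtain ⟨a, b, hab, ha0, hb0⟩ :
      ∃ a b : ℝ, (∀ r ∈ T, r = a ∨ r = b) ∧ a ≠ 0 ∧ b ≠ 0 := by
    by_cases hTe : T = ∅
    · exact ⟨1, 1, by simp [hTe], one_ne_zero, one_ne_zero⟩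
    obtain ⟨a, haT⟩ := Set.nonempty_iff_ne_empty.2 hTe
    by_cases hTa : ∀ r ∈ T, r = a
    · exact ⟨a, 1, fun r hr => Or.inl (hTa r hr), hTpos a haT, one_ne_zero⟩
    push_neg at hTa
    obtain ⟨b, hbT, hba⟩ := hTa
    refine ⟨a, b, ?_, hTpos a haT, hTpos b hbT⟩
    by_contra hc
    push_neg at hc
    obtain ⟨c, hcT, hca, hcb⟩ := hc
    have hsub : ({a, b, c} : Set ℝ) ⊆ T := by
      rintro x (rfl | rfl | rfl) <;> assumption
    have h3 : ({a, b, c} : Set ℝ).ncard = 3 := by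
      rw [Set.ncard_eq_three]
      exact ⟨a, b, c, Ne.symm hba, Ne.symm hca, Ne.symm hcb, rfl⟩
    have hle := Set.ncard_le_ncard hsub hfin
    omega
  -- the quadratic functions
  set f : EuclideanSpace ℝ (Fin d) → EuclideanSpace ℝ (Fin d) → ℝ :=
    fun p x => (2 - 2 * (inner ℝ p x : ℝ) - a ^ 2) * (2 - 2 * (inner ℝ p x : ℝ) - b ^ 2)
    with hfdef
  have hdist : ∀ p ∈ S, ∀ q ∈ S, dist p q ^ 2 = 2 - 2 * (inner ℝ p q : ℝ) := by
    intro p hp q hq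
    rw [dist_eq_norm, norm_sub_sq_real, hsph p hp, hsph q hq]; ring
  have hoff : ∀ p ∈ S, ∀ q ∈ S, p ≠ q → f p q = 0 := by
    intro p hp q hq hpq
    have hmem : dist p q ∈ T := ⟨p, hp, q, hq, hpq, rfl⟩
    have h2 : (2 : ℝ) - 2 * (inner ℝ p q : ℝ) = dist p q ^ 2 := (hdist p hp q hq).symm
    rcases hab _ hmem with hd | hd
    · simp only [hfdef, h2, hd]; ring
    · simp only [hfdef, h2, hd]; ring
  have hdiag : ∀ p ∈ S, f p p = a ^ 2 * b ^ 2 := by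
    intro p hp
    have hinner : (inner ℝ p p : ℝ) = 1 := by
      rw [real_inner_self_eq_norm_sq, hsph p hp]; norm_num
    simp only [hfdef, hinner]; ring
  have hli : LinearIndependent ℝ (fun p : {x // x ∈ S} =>
      f (p : EuclideanSpace ℝ (Fin d))) := by
    rw [Fintype.linearIndependent_iff]
    intro g hg q
    have hq := congrFun hg (q : EuclideanSpace ℝ (Fin d))
    simp only [Finset.sum_apply, Pi.smul_apply, smul_eq_mul, Pi.zero_apply] at hq
    rw [Finset.sum_eq_single q (fun p _ hpq => by
        rw [hoff _ p.2 _ q.2 (fun he => hpq (Subtype.ext he)), mul_zero])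
      (fun hq' => absurd (Finset.mem_univ q) hq')] at hq
    rw [hdiag _ q.2] at hq
    have hne : a ^ 2 * b ^ 2 ≠ 0 := by positivity
    exact (mul_eq_zero.1 hq).resolve_right hne
  have hmem : ∀ p : {x // x ∈ S},
      f (p : EuclideanSpace ℝ (Fin d)) ∈ Submodule.span ℝ (Set.range (mono d)) :=
    fun p => quad_mem_span _ a b
  haveI : Module.Finite ℝ (Submodule.span ℝ (Set.range (mono d))) :=
    Module.Finite.span_of_finite ℝ (Set.finite_range _)
  have hli' : LinearIndependent ℝ (fun p : {x // x ∈ S} =>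
      (⟨f (p : EuclideanSpace ℝ (Fin d)), hmem p⟩ :
        Submodule.span ℝ (Set.range (mono d)))) :=
    hli.of_comp (Submodule.span ℝ (Set.range (mono d))).subtype
  have hcard : Fintype.card {x // x ∈ S} ≤
      Module.finrank ℝ (Submodule.span ℝ (Set.range (mono d))) :=
    hli'.fintype_card_le_finrank
  have hrank : Module.finrank ℝ (Submodule.span ℝ (Set.range (mono d))) ≤
      Fintype.card (Option (Fin d) ⊕ Sym2 (Fin d)) := finrank_range_le_card (mono d)
  have hcι : Fintype.card (Option (Fin d) ⊕ Sym2 (Fin d)) = (d + 1) + (d + 1) * d / 2 := by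
    rw [Fintype.card_sum, Fintype.card_option, Fintype.card_fin, Sym2.card,
      Nat.choose_two_right, Fintype.card_fin]
    simp
  have hS : S.card = Fintype.card {x // x ∈ S} := (Fintype.card_coe S).symm
  obtain ⟨k, hk⟩ : 2 ∣ d * (d + 1) := (Nat.even_mul_succ_self d).two_dvd
  have hprod : (d + 1) * (d + 2) = d * (d + 1) + 2 * (d + 1) := by ring
  have hcomm : (d + 1) * d = d * (d + 1) := by ring
  omega
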